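/- For a positive integer m, any odd integer p \ge 3 and any integer k: (p+1) m^p S_p^{(k)}(1,m) = \sum_{i=0}^{p+1} \binom{p+1}{i} B_i m^{p+1-i} B_{p+1-i}^{(k)}(1) + (1/(p+2)) \sum_{i=0}^{p+1} \binom{p+2}{i} (i-1) B_i m^{p+1-i} (B_{p+2-i}^{(k)}(1) - B_{p+2-i}^{(k)}). -/

import Mathlib

noncomputable section

/-- Signed Stirling numbers of the first kind. -/
def stirling1 : ℕ → ℕ → ℤ
  | 0, 0 => 1
  | 0, _ + 1 => 0
  | _ + 1, 0 => 0
  | n + 1, m + 1 => stirling1 n m - n * stirling1 n (m + 1)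

/-- `n!`-normalized coefficients of `Ei_k (log (1+t))`. -/
def polyExpCoeff (k : ℤ) (n : ℕ) : ℚ :=
  ∑ m ∈ Finset.Icc 1 n, (stirling1 n m : ℚ) / (m : ℚ) ^ (k - 1)

/-- Type 2 poly-Bernoulli numbers of index `k`, defined by the recursion coming from the
generating function `Ei_k (log (1+t)) / (e^t - 1) = ∑ B_n^{(k)} t^n/n!`. -/
def polyBernoulli (k : ℤ) : ℕ → ℚ
  | n =>
    (polyExpCoeff k (n + 1) -
      ∑ l ∈ (Finset.range n).attach, ((n + 1).choose l.1 : ℚ) * polyBernoulli k l.1) / (n + 1)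
  termination_by n => n
  decreasing_by exact Finset.mem_range.mp l.2

/-- Type 2 poly-Bernoulli polynomials of index `k`, as functions on `ℝ`. -/
def polyBernoulliPoly (k : ℤ) (n : ℕ) (x : ℝ) : ℝ :=
  ∑ l ∈ Finset.range (n + 1), (n.choose l : ℝ) * (polyBernoulli k l : ℝ) * x ^ (n - l)

/-- Bernoulli polynomials as functions on `ℝ`. -/
def bernoulliPolyFun (n : ℕ) (x : ℝ) : ℝ :=
  ∑ l ∈ Finset.range (n + 1), (n.choose l : ℝ) * (bernoulli l : ℝ) * x ^ (n - l)

/-- Bernoulli functions `B̄_n(x) = B_n(⟨x⟩)`. -/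
def bernoulliBar (n : ℕ) (x : ℝ) : ℝ := bernoulliPolyFun n (Int.fract x)

/-- Type 2 poly-Bernoulli functions `B̄_n^{(k)}(x) = B_n^{(k)}(⟨x⟩)`. -/
def polyBernoulliBar (k : ℤ) (n : ℕ) (x : ℝ) : ℝ := polyBernoulliPoly k n (Int.fract x)

/-- Poly-Dedekind sums `S_p^{(k)}(h,m)`. -/
def polyDedekindSum (k : ℤ) (p h m : ℕ) : ℝ :=
  ∑ μ ∈ Finset.Ico 1 m, (μ / m : ℝ) * polyBernoulliBar k p (h * μ / m)

/-- Apostol's generalized Dedekind sums `S_p(h,m)`. -/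
def genDedekindSum (p h m : ℕ) : ℝ :=
  ∑ μ ∈ Finset.Ico 1 m, (μ / m : ℝ) * bernoulliBar p (h * μ / m)

/-- The polyexponential function `Ei_k`. -/
def polyExp (k : ℤ) (x : ℝ) : ℝ :=
  ∑' n : ℕ, x ^ (n + 1) / ((n + 1 : ℝ) ^ k * (Nat.factorial n : ℝ))

/-- The sawtooth function `((x))`. -/
def sawtooth (x : ℝ) : ℝ := if Int.fract x = 0 then 0 else Int.fract x - 1 / 2

end
open Finset

private lemma tri_choose {n i l : ℕ} (h : i + l ≤ n) :
    n.choose i * (n - i).choose l = n.choose l * (n - l).choose i := by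
  have h1 := Nat.choose_mul (n := n) (Nat.le_add_right i l)
  have h2 := Nat.choose_mul (n := n) (Nat.le_add_left l i)
  rw [show i + l - i = l by omega] at h1
  rw [show i + l - l = i by omega] at h2
  have h5 : (i + l).choose l = (i + l).choose i := by
    have := Nat.choose_symm (Nat.le_add_right i l)
    rwa [Nat.add_sub_cancel_left] at this
  rw [← h1, ← h2, h5]

private lemma sum_tri_comm (n : ℕ) (f : ℕ → ℕ → ℝ) :
    ∑ a ∈ range n, ∑ b ∈ range (n - a), f a b
      = ∑ b ∈ range n, ∑ a ∈ range (n - b), f a b := by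
  have h : ∀ (g : ℕ → ℕ → ℝ), ∀ a, a < n →
      ∑ b ∈ range (n - a), g a b = ∑ b ∈ range n, if a + b < n then g a b else 0 := by
    intro g a ha
    rw [← Finset.sum_filter]
    apply Finset.sum_congr _ (fun _ _ => rfl)
    ext b
    simp only [mem_range, mem_filter]
    omega
  calc ∑ a ∈ range n, ∑ b ∈ range (n - a), f a b
      = ∑ a ∈ range n, ∑ b ∈ range n, if a + b < n then f a b else 0 :=
        Finset.sum_congr rfl fun a ha => h f a (mem_range.mp ha)
    _ = ∑ b ∈ range n, ∑ a ∈ range n, if a + b < n then f a b else 0 := Finset.sum_comm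
    _ = ∑ b ∈ range n, ∑ a ∈ range (n - b), f a b := by
        refine Finset.sum_congr rfl fun b hb => ?_
        rw [h (fun x y => f y x) b (mem_range.mp hb)]
        exact Finset.sum_congr rfl fun a _ => by rw [Nat.add_comm]

private lemma sum_range_pow_real (n q : ℕ) :
    ∑ j ∈ Finset.range n, (j : ℝ) ^ q
      = ∑ i ∈ Finset.range (q + 1),
          (bernoulli i : ℝ) * ((q + 1).choose i : ℝ) * (n : ℝ) ^ (q + 1 - i) / ((q : ℝ) + 1) := by
  have h := congrArg (fun x : ℚ => (x : ℝ)) (sum_range_pow n q)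
  push_cast at h
  exact h

private lemma key_ident (p l i : ℕ) (h : l + i ≤ p + 1) :
    ((p : ℝ) + 1) * (p.choose l : ℝ) * ((p + 2 - l).choose i : ℝ) / ((p + 2 - l : ℕ) : ℝ)
      = ((p + 1).choose i : ℝ) * ((p + 1 - i).choose l : ℝ)
          + ((i : ℝ) - 1) / ((p : ℝ) + 2) * ((p + 2).choose i : ℝ) * ((p + 2 - i).choose l : ℝ) := by
  have hp2 : ((p : ℝ) + 2) ≠ 0 := by positivity
  rcases Nat.lt_or_ge l (p + 1) with hl | hl
  · obtain ⟨d, rfl⟩ : ∃ d, p = l + d := ⟨p - l, by omega⟩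
    have hi : i ≤ d + 1 := by omega
    have f1 : ((l + d + 1).choose i : ℝ) * ((l + d + 1 - i).choose l : ℝ)
        = ((l + d + 1).choose l : ℝ) * ((d + 1).choose i : ℝ) := by
      have h0 := tri_choose (n := l + d + 1) (i := i) (l := l) (by omega)
      rw [show l + d + 1 - l = d + 1 by omega] at h0
      exact_mod_cast congrArg (Nat.cast : ℕ → ℝ) h0
    have f2 : ((l + d + 2).choose i : ℝ) * ((l + d + 2 - i).choose l : ℝ)
        = ((l + d + 2).choose l : ℝ) * ((d + 2).choose i : ℝ) := by
      have h0 := tri_choose (n := l + d + 2) (i := i) (l := l) (by omega)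
      rw [show l + d + 2 - l = d + 2 by omega] at h0
      exact_mod_cast congrArg (Nat.cast : ℕ → ℝ) h0
    have e1 : ((l + d).choose l : ℝ) * ((l : ℝ) + (d : ℝ) + 1)
        = ((l + d + 1).choose l : ℝ) * ((d : ℝ) + 1) := by
      have h0 := Nat.choose_mul_succ_eq (l + d) l
      rw [show l + d + 1 - l = d + 1 by omega] at h0
      exact_mod_cast congrArg (Nat.cast : ℕ → ℝ) h0
    have e2 : ((l + d + 1).choose l : ℝ) * ((l : ℝ) + (d : ℝ) + 2)
        = ((l + d + 2).choose l : ℝ) * ((d : ℝ) + 2) := by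
      have h0 := Nat.choose_mul_succ_eq (l + d + 1) l
      rw [show l + d + 1 + 1 - l = d + 2 by omega] at h0
      exact_mod_cast congrArg (Nat.cast : ℕ → ℝ) h0
    have e3 : ((d + 1).choose i : ℝ) * ((d : ℝ) + 2)
        = ((d + 2).choose i : ℝ) * ((d : ℝ) + 2 - (i : ℝ)) := by
      have h0 := Nat.choose_mul_succ_eq (d + 1) i
      have h1 := congrArg (Nat.cast : ℕ → ℝ) h0
      push_cast [Nat.cast_sub (by omega : i ≤ d + 1 + 1)] at h1
      linear_combination h1
    have main : ((l:ℝ)+(d:ℝ)+1)*((l:ℝ)+(d:ℝ)+2)*((l + d).choose l : ℝ)*((d + 2).choose i : ℝ)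
        = ((l:ℝ)+(d:ℝ)+2)*((d:ℝ)+2)*((l + d + 1).choose i : ℝ)*((l + d + 1 - i).choose l : ℝ)
          + ((i:ℝ)-1)*((d:ℝ)+2)*((l + d + 2).choose i : ℝ)*((l + d + 2 - i).choose l : ℝ) := by
      linear_combination (-(((l:ℝ)+(d:ℝ)+2)*((d:ℝ)+2)))*f1 - (((i:ℝ)-1)*((d:ℝ)+2))*f2
        + (((l:ℝ)+(d:ℝ)+2)*((d + 2).choose i : ℝ))*e1 + (((i:ℝ)-1)*((d + 2).choose i : ℝ))*e2
        - (((l:ℝ)+(d:ℝ)+2)*((l + d + 1).choose l : ℝ))*e3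
    rw [show l + d + 2 - l = d + 2 by omega]
    have hd2 : ((d : ℝ) + 2) ≠ 0 := by positivity
    push_cast
    field_simp
    linear_combination main
  · have hl' : l = p + 1 := by omega
    have hi : i = 0 := by omega
    subst hl' hi
    rw [Nat.choose_eq_zero_of_lt (by omega : p < p + 1)]
    simp only [Nat.choose_zero_right, Nat.cast_one, Nat.cast_zero, Nat.sub_zero]
    rw [Nat.choose_self, show (p + 2).choose (p + 1) = p + 2 from Nat.choose_succ_self_right (p+1)]
    push_cast
    field_simp
    ring

/-- Formula for `(p+1) m^p S_p^{(k)}(1,m)` for odd `p ≥ 3`. -/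

theorem polyDedekind_one' (m p : ℕ) (k : ℤ) (hm : 0 < m) (hodd : Odd p) (hp : 3 ≤ p) :
    ((p : ℝ) + 1) * (m : ℝ) ^ p * polyDedekindSum k p 1 m =
      (∑ i ∈ Finset.range (p + 2),
          ((p + 1).choose i : ℝ) * (bernoulli i : ℝ) * (m : ℝ) ^ (p + 1 - i) *
            polyBernoulliPoly k (p + 1 - i) 1) +
        1 / ((p : ℝ) + 2) * ∑ i ∈ Finset.range (p + 2),
          ((p + 2).choose i : ℝ) * ((i : ℝ) - 1) * (bernoulli i : ℝ) * (m : ℝ) ^ (p + 1 - i) *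
            (polyBernoulliPoly k (p + 2 - i) 1 - (polyBernoulli k (p + 2 - i) : ℝ)) := by
  have hm' : (0:ℝ) < (m:ℝ) := by exact_mod_cast hm
  have hM : (m:ℝ) ≠ 0 := ne_of_gt hm'
  -- Step 1: unfold the Dedekind sum
  have hstep1 : polyDedekindSum k p 1 m
      = ∑ μ ∈ Finset.range m, ((μ:ℝ)/(m:ℝ)) * polyBernoulliPoly k p ((μ:ℝ)/(m:ℝ)) := by
    rw [polyDedekindSum, Finset.range_eq_Ico, Finset.sum_eq_sum_Ico_succ_bot hm]
    rw [Nat.cast_zero, zero_div, zero_mul, zero_add]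
    refine Finset.sum_congr rfl fun μ hμ => ?_
    obtain ⟨h1, h2⟩ := Finset.mem_Ico.mp hμ
    rw [polyBernoulliBar, Nat.cast_one, one_mul, Int.fract_eq_self.mpr
      ⟨by positivity, by rw [div_lt_one hm']; exact_mod_cast h2⟩]
  have hstep2 : ∀ x : ℝ, x * polyBernoulliPoly k p x
      = ∑ l ∈ Finset.range (p+1), (p.choose l : ℝ) * (polyBernoulli k l : ℝ) * x ^ (p+1-l) := by
    intro x
    rw [polyBernoulliPoly, Finset.mul_sum]
    refine Finset.sum_congr rfl fun l hl => ?_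
    rw [show p + 1 - l = (p - l) + 1 by have := Finset.mem_range.mp hl; omega, pow_succ]
    ring
  have hchain1 : polyDedekindSum k p 1 m
      = ∑ l ∈ Finset.range (p+1), (p.choose l : ℝ) * (polyBernoulli k l : ℝ)
          * ∑ μ ∈ Finset.range m, ((μ:ℝ)/(m:ℝ)) ^ (p+1-l) := by
    rw [hstep1]
    calc ∑ μ ∈ Finset.range m, ((μ:ℝ)/(m:ℝ)) * polyBernoulliPoly k p ((μ:ℝ)/(m:ℝ))
        = ∑ μ ∈ Finset.range m, ∑ l ∈ Finset.range (p+1),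
            (p.choose l : ℝ) * (polyBernoulli k l : ℝ) * ((μ:ℝ)/(m:ℝ)) ^ (p+1-l) :=
          Finset.sum_congr rfl fun μ _ => hstep2 _
      _ = ∑ l ∈ Finset.range (p+1), ∑ μ ∈ Finset.range m,
            (p.choose l : ℝ) * (polyBernoulli k l : ℝ) * ((μ:ℝ)/(m:ℝ)) ^ (p+1-l) :=
          Finset.sum_comm
      _ = ∑ l ∈ Finset.range (p+1), (p.choose l : ℝ) * (polyBernoulli k l : ℝ)
            * ∑ μ ∈ Finset.range m, ((μ:ℝ)/(m:ℝ)) ^ (p+1-l) :=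
          Finset.sum_congr rfl fun l _ => (Finset.mul_sum _ _ _).symm
  -- Step 2: Faulhaber
  have hchain2 : ((p:ℝ)+1) * (m:ℝ)^p * polyDedekindSum k p 1 m
      = ∑ l ∈ Finset.range (p+2), ∑ i ∈ Finset.range (p+2-l),
          (((p:ℝ)+1) * (p.choose l : ℝ) * ((p+2-l).choose i : ℝ) / ((p+2-l : ℕ) : ℝ))
            * ((bernoulli i : ℝ) * (polyBernoulli k l : ℝ) * (m:ℝ)^(p+1-i)) := by
    rw [hchain1, Finset.mul_sum]
    conv_rhs => rw [Finset.sum_range_succ]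
    rw [Nat.choose_eq_zero_of_lt (by omega : p < p + 1)]
    simp only [Nat.cast_zero, mul_zero, zero_mul, zero_div, Finset.sum_const_zero, add_zero]
    refine Finset.sum_congr rfl fun l hl => ?_
    have hl' : l < p + 1 := Finset.mem_range.mp hl
    have hq : p + 1 - l + 1 = p + 2 - l := by omega
    have hpowsum : ∑ μ ∈ Finset.range m, ((μ:ℝ)/(m:ℝ))^(p+1-l)
        = ∑ i ∈ Finset.range (p+2-l),
            (bernoulli i : ℝ) * ((p+2-l).choose i : ℝ) * (m:ℝ)^(p+2-l-i) / ((p+2-l:ℕ):ℝ)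
              / (m:ℝ)^(p+1-l) := by
      simp only [div_pow]
      rw [← Finset.sum_div, sum_range_pow_real m (p+1-l), Finset.sum_div]
      have hc : ((p+1-l:ℕ):ℝ) + 1 = ((p+2-l:ℕ):ℝ) := by exact_mod_cast congrArg (Nat.cast : ℕ → ℝ) hq
      rw [hc, hq]
    rw [hpowsum, Finset.mul_sum, Finset.mul_sum]
    refine Finset.sum_congr rfl fun i hi => ?_
    have hi' : i < p + 2 - l := Finset.mem_range.mp hi
    have hMp : (m:ℝ)^p * (m:ℝ)^(p+2-l-i) = (m:ℝ)^(p+1-i) * (m:ℝ)^(p+1-l) := by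
      rw [← pow_add, ← pow_add]; congr 1; omega
    have hD : ((p+2-l:ℕ):ℝ) ≠ 0 := Nat.cast_ne_zero.mpr (by omega)
    field_simp
    linear_combination ((p.choose l : ℝ) * (polyBernoulli k l : ℝ)
      * (bernoulli i : ℝ) * ((p+2-l).choose i : ℝ)) * hMp
  -- Step 3: the right-hand side as a double sum
  have hpoly1 : ∀ i ∈ Finset.range (p+2), polyBernoulliPoly k (p+1-i) 1
      = ∑ l ∈ Finset.range (p+2-i), ((p+1-i).choose l : ℝ) * (polyBernoulli k l : ℝ) := by
    intro i hi
    rw [polyBernoulliPoly, show p+1-i+1 = p+2-i by have := Finset.mem_range.mp hi; omega]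
    exact Finset.sum_congr rfl fun l _ => by rw [one_pow, mul_one]
  have hpoly2 : ∀ i ∈ Finset.range (p+2),
      polyBernoulliPoly k (p+2-i) 1 - (polyBernoulli k (p+2-i) : ℝ)
        = ∑ l ∈ Finset.range (p+2-i), ((p+2-i).choose l : ℝ) * (polyBernoulli k l : ℝ) := by
    intro i hi
    rw [polyBernoulliPoly, Finset.sum_range_succ]
    simp only [Nat.choose_self, Nat.cast_one, one_mul, Nat.sub_self, pow_zero, mul_one, one_pow]
    rw [add_sub_cancel_right]
  have hchain3 : (∑ i ∈ Finset.range (p + 2),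
          ((p + 1).choose i : ℝ) * (bernoulli i : ℝ) * (m : ℝ) ^ (p + 1 - i) *
            polyBernoulliPoly k (p + 1 - i) 1) +
        1 / ((p : ℝ) + 2) * ∑ i ∈ Finset.range (p + 2),
          ((p + 2).choose i : ℝ) * ((i : ℝ) - 1) * (bernoulli i : ℝ) * (m : ℝ) ^ (p + 1 - i) *
            (polyBernoulliPoly k (p + 2 - i) 1 - (polyBernoulli k (p + 2 - i) : ℝ))
      = ∑ i ∈ Finset.range (p+2), ∑ l ∈ Finset.range (p+2-i),
          (((p+1).choose i : ℝ) * ((p+1-i).choose l : ℝ)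
              + ((i:ℝ) - 1) / ((p:ℝ) + 2) * ((p+2).choose i : ℝ) * ((p+2-i).choose l : ℝ))
            * ((bernoulli i : ℝ) * (polyBernoulli k l : ℝ) * (m:ℝ)^(p+1-i)) := by
    rw [Finset.mul_sum, ← Finset.sum_add_distrib]
    refine Finset.sum_congr rfl fun i hi => ?_
    rw [hpoly1 i hi, hpoly2 i hi]
    simp only [Finset.mul_sum]
    rw [← Finset.sum_add_distrib]
    exact Finset.sum_congr rfl fun l _ => by ring
  rw [hchain2, hchain3, sum_tri_comm]
  refine Finset.sum_congr rfl fun i hi => Finset.sum_congr rfl fun l hl => ?_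
  have h : l + i ≤ p + 1 := by
    have h1 := Finset.mem_range.mp hi
    have h2 := Finset.mem_range.mp hl
    omega
  rw [key_ident p l i h]
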